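/- Let E and E' be two distinct size-m subsets of {1,…,L}, and assume that for every ℓ the Kullback–Leibler divergences D(f_ℓ‖g_ℓ) and D(g_ℓ‖f_ℓ) are finite and strictly positive. Then ∫_{ℝ^L} p_{E'}(x) log(p_E(x)/g(x)) dx = ∑_{ℓ ∈ E ∩ E'} D(f_ℓ‖g_ℓ) − ∑_{ℓ ∈ E \ E'} D(g_ℓ‖f_ℓ), and consequently ∫_{ℝ^L} p_{E'}(x) log(p_E(x)/g(x)) dx < ∫_{ℝ^L} p_E(x) log(p_E(x)/g(x)) dx = ∑_{ℓ ∈ E} D(f_ℓ‖g_ℓ). -/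

import Mathlib

open MeasureTheory ProbabilityTheory Filter Finset
open scoped ENNReal NNReal Classical

namespace MovingAnomaly

/-- The observation space of the sensor network: one real observation per sensor. -/
abbrev Obs (L : ℕ) := Fin L → ℝ

/-- The sample space: an infinite sequence of vector observations.
Coordinate `n : ℕ` carries the observation `X[n+1]` at time `n+1`. -/
abbrev Traj (L : ℕ) := ℕ → Obs L

/-- The collection ℰ of all size-`m` subsets of the `L` sensors. -/
abbrev ESet (L m : ℕ) := {E : Finset (Fin L) // E.card = m}

/-- Membership in the probability simplex 𝒜 over ℰ. -/
def MemSimplex (L m : ℕ) (α : ESet L m → ℝ) : Prop :=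
  (∀ E, 0 ≤ α E) ∧ ∑ E : ESet L m, α E = 1

/-- `d` is a strictly positive probability density on ℝ (w.r.t. Lebesgue measure). -/
structure IsPosDensity (d : ℝ → ℝ) : Prop where
  meas : Measurable d
  pos : ∀ t, 0 < d t
  int_one : ∫ t, d t = 1

/-- Joint non-anomalous density `g(x) = ∏ g_ℓ(x_ℓ)`. -/
def gdens {L : ℕ} (g : Fin L → ℝ → ℝ) (x : Obs L) : ℝ := ∏ ℓ, g ℓ (x ℓ)

/-- Joint density `p_E(x)` when the anomalous sensors are those of `E`. -/
def pdens {L : ℕ} (f g : Fin L → ℝ → ℝ) (E : Finset (Fin L)) (x : Obs L) : ℝ :=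
  ∏ ℓ, if ℓ ∈ E then f ℓ (x ℓ) else g ℓ (x ℓ)

/-- The mixture density `p̄_α(x) = ∑_E α_E p_E(x)`. -/
def pbar {L m : ℕ} (f g : Fin L → ℝ → ℝ) (α : ESet L m → ℝ) (x : Obs L) : ℝ :=
  ∑ E : ESet L m, α E * pdens f g E.1 x

/-- The measure on ℝ with density `d` w.r.t. Lebesgue measure. -/
noncomputable def densMeasure (d : ℝ → ℝ) : Measure ℝ :=
  volume.withDensity fun t => ENNReal.ofReal (d t)

/-- The product measure on `ℝ^L` whose `ℓ`-th marginal has density `d ℓ`. -/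
noncomputable def jointMeasure {L : ℕ} (d : Fin L → ℝ → ℝ) : Measure (Obs L) :=
  Measure.pi fun ℓ => densMeasure (d ℓ)

/-- The measure with joint density `p_E`. -/
noncomputable def pMeasure {L : ℕ} (f g : Fin L → ℝ → ℝ) (E : Finset (Fin L)) :
    Measure (Obs L) :=
  jointMeasure fun ℓ => if ℓ ∈ E then f ℓ else g ℓ

/-- The mixture measure with density `p̄_α`. -/
noncomputable def mixMeasure {L m : ℕ} (f g : Fin L → ℝ → ℝ) (α : ESet L m → ℝ) :
    Measure (Obs L) :=
  ∑ E : ESet L m, ENNReal.ofReal (α E) • pMeasure f g E.1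

/-- `P` is the infinite product measure on the sequence space under which the coordinates
are independent and coordinate `n` has law `μ n`. -/
def IsProductLaw {L : ℕ} (P : Measure (Traj L)) (μ : ℕ → Measure (Obs L)) : Prop :=
  IsProbabilityMeasure P ∧
    iIndepFun (fun n (ω : Traj L) => ω n) P ∧
    ∀ n, P.map (fun ω => ω n) = μ n

/-- The natural filtration: `Fil L k = σ(X[1],…,X[k])`. -/
def Fil (L : ℕ) (k : ℕ) : MeasurableSpace (Traj L) :=
  MeasurableSpace.comap (fun (ω : Traj L) (i : Fin k) => ω i) inferInstance

/-- A stopping time of the natural filtration (valued in ℕ ∪ {∞}, time 0 excluded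
by requiring values ≥ 1 where needed). -/
def IsStopping {L : ℕ} (τ : Traj L → ℕ∞) : Prop :=
  ∀ k : ℕ, MeasurableSet[Fil L k] {ω | τ ω ≤ (k : ℕ∞)}

/-- The quantity `esssup_{τ>ν} E_P[τ - ν | F_ν]`, with the convention that it equals `1`
when `P(τ > ν) = 0`. -/
noncomputable def condDelay {L : ℕ} (P : Measure (Traj L)) (ν : ℕ) (τ : Traj L → ℕ∞) :
    ℝ≥0∞ :=
  if hP : IsFiniteMeasure P then
    haveI := hP
    if P {ω | (ν : ℕ∞) < τ ω} = 0 then 1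
    else
      essSup
        (fun ω => ∫⁻ ω', ((τ ω' - (ν : ℕ∞) : ℕ∞) : ℝ≥0∞) ∂(condExpKernel P (Fil L ν) ω))
        (P.restrict {ω | (ν : ℕ∞) < τ ω})
  else 1

/-- Lorden-type worst-path delay `WADD(τ)`, given the family of measures `PS S ν = P_ν^S`. -/
noncomputable def wadd {L m : ℕ} (PS : (ℕ → ESet L m) → ℕ → Measure (Traj L))
    (τ : Traj L → ℕ∞) : ℝ≥0∞ :=
  ⨆ (S : ℕ → ESet L m) (ν : ℕ), condDelay (PS S ν) ν τ

/-- The delay `\overline{WADD}_α(τ)` for the randomized-anomaly model, given the family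
`Pb ν = P̄_ν^α`. -/
noncomputable def waddBar {L : ℕ} (Pb : ℕ → Measure (Traj L)) (τ : Traj L → ℕ∞) : ℝ≥0∞ :=
  ⨆ ν : ℕ, condDelay (Pb ν) ν τ

/-- Mean time to false alarm `E_∞[τ]` (as an extended nonnegative real). -/
noncomputable def mtfa {L : ℕ} (Pinf : Measure (Traj L)) (τ : Traj L → ℕ∞) : ℝ≥0∞ :=
  ∫⁻ ω, ((τ ω : ℕ∞) : ℝ≥0∞) ∂Pinf

/-- The class `C_γ` of stopping times with mean time to false alarm at least `γ`. -/
def Cgamma {L : ℕ} (Pinf : Measure (Traj L)) (γ : ℝ) (τ : Traj L → ℕ∞) : Prop :=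
  IsStopping τ ∧ ENNReal.ofReal γ ≤ mtfa Pinf τ

/-- The CUSUM statistic driven by the likelihood ratio `lr`:
`W[0] = 0`, `W[k] = max(W[k-1],1) * lr(X[k])`. -/
noncomputable def cusumStat {L : ℕ} (lr : Obs L → ℝ) (ω : Traj L) : ℕ → ℝ
  | 0 => 0
  | k + 1 => max (cusumStat lr ω k) 1 * lr (ω k)

/-- The instantaneous likelihood ratio `p̄_λ(x)/g(x)` of the M-CUSUM test. -/
noncomputable def mlr {L m : ℕ} (f g : Fin L → ℝ → ℝ) (lam : ESet L m → ℝ) (x : Obs L) : ℝ :=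
  pbar f g lam x / gdens g x

/-- The M-CUSUM stopping time `τ_W(λ, b) = inf {k ≥ 1 : W_λ[k] ≥ e^b}` (∞ if no such k). -/
noncomputable def mcusumTime {L m : ℕ} (f g : Fin L → ℝ → ℝ) (lam : ESet L m → ℝ) (b : ℝ)
    (ω : Traj L) : ℕ∞ :=
  sInf {t : ℕ∞ | ∃ k : ℕ, t = (k : ℕ∞) ∧ 1 ≤ k ∧ Real.exp b ≤ cusumStat (mlr f g lam) ω k}

/-- The Kullback–Leibler number `I_α = ∫ p̄_α log(p̄_α/g)`. -/
noncomputable def KLnum {L m : ℕ} (f g : Fin L → ℝ → ℝ) (α : ESet L m → ℝ) : ℝ :=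
  ∫ x : Obs L, pbar f g α x * Real.log (pbar f g α x / gdens g x)

lemma cross {L : ℕ} (f g : Fin L → ℝ → ℝ)
    (hf : ∀ ℓ, IsPosDensity (f ℓ)) (hg : ∀ ℓ, IsPosDensity (g ℓ))
    (hDfg : ∀ ℓ, Integrable (fun t : ℝ => f ℓ t * Real.log (f ℓ t / g ℓ t)) volume)
    (hDgf : ∀ ℓ, Integrable (fun t : ℝ => g ℓ t * Real.log (g ℓ t / f ℓ t)) volume)
    (E E' : Finset (Fin L)) :
    (∫ x : Obs L, pdens f g E' x * Real.log (pdens f g E x / gdens g x)) =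
      (∑ ℓ ∈ E ∩ E', ∫ t : ℝ, f ℓ t * Real.log (f ℓ t / g ℓ t)) -
        ∑ ℓ ∈ E \ E', ∫ t : ℝ, g ℓ t * Real.log (g ℓ t / f ℓ t) := by
  -- notation
  set q : Fin L → ℝ → ℝ := fun ℓ => if ℓ ∈ E' then f ℓ else g ℓ with hq
  have hqpos : ∀ ℓ t, 0 < q ℓ t := by
    intro ℓ t; by_cases h : ℓ ∈ E' <;> simp [hq, h, (hf ℓ).pos t, (hg ℓ).pos t]
  have hqint : ∀ ℓ, Integrable (q ℓ) volume := by
    intro ℓ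
    by_cases h : ℓ ∈ E'
    · simpa [hq, h] using integrable_of_integral_eq_one (hf ℓ).int_one
    · simpa [hq, h] using integrable_of_integral_eq_one (hg ℓ).int_one
  have hqone : ∀ ℓ, ∫ t, q ℓ t = 1 := by
    intro ℓ; by_cases h : ℓ ∈ E' <;> simp [hq, h, (hf ℓ).int_one, (hg ℓ).int_one]
  have hpd : ∀ x : Obs L, pdens f g E' x = ∏ ℓ, q ℓ (x ℓ) := by
    intro x; unfold pdens; apply Finset.prod_congr rfl; intro ℓ _
    by_cases h : ℓ ∈ E' <;> simp [hq, h]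
  -- pointwise log rewrite
  have hlog : ∀ x : Obs L, Real.log (pdens f g E x / gdens g x) =
      ∑ ℓ ∈ E, Real.log (f ℓ (x ℓ) / g ℓ (x ℓ)) := by
    intro x
    have hratio : pdens f g E x / gdens g x = ∏ ℓ ∈ E, f ℓ (x ℓ) / g ℓ (x ℓ)  := by
      unfold pdens gdens
      rw [← Finset.prod_div_distrib]
      rw [show (∏ ℓ, (if ℓ ∈ E then f ℓ (x ℓ) else g ℓ (x ℓ)) / g ℓ (x ℓ)) =
          ∏ ℓ, (if ℓ ∈ E then f ℓ (x ℓ) / g ℓ (x ℓ) else 1) from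
        Finset.prod_congr rfl fun ℓ _ => by
          by_cases h : ℓ ∈ E <;> simp [h, div_self (ne_of_gt ((hg ℓ).pos (x ℓ)))]]
      exact Fintype.prod_ite_mem E _
    rw [hratio, Real.log_prod]
    intro ℓ _
    exact ne_of_gt (div_pos ((hf ℓ).pos _) ((hg ℓ).pos _))
  -- the per-coordinate integrand for a fixed ℓ0 ∈ E
    -- F ℓ0 t = q ℓ0 t * log (f/g), F ℓ t = q ℓ t otherwise
  have key : ∀ ℓ0 : Fin L,
      (∫ x : Obs L, pdens f g E' x * Real.log (f ℓ0 (x ℓ0) / g ℓ0 (x ℓ0))) =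
        ∫ t, q ℓ0 t * Real.log (f ℓ0 t / g ℓ0 t) := by
    intro ℓ0
    have heq : ∀ x : Obs L, pdens f g E' x * Real.log (f ℓ0 (x ℓ0) / g ℓ0 (x ℓ0)) =
        ∏ ℓ, (fun ℓ (t : ℝ) =>
          q ℓ t * (if ℓ = ℓ0 then Real.log (f ℓ0 t / g ℓ0 t) else 1)) ℓ (x ℓ) := by
      intro x
      rw [hpd, Finset.prod_mul_distrib]
      congr 1
      simp [Finset.prod_ite_eq']
    simp_rw [heq]
    rw [MeasureTheory.integral_fintype_prod_volume_eq_prod (𝕜 := ℝ)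
      (f := fun ℓ (t : ℝ) => q ℓ t * (if ℓ = ℓ0 then Real.log (f ℓ0 t / g ℓ0 t) else 1))]
    rw [Finset.prod_eq_single ℓ0]
    · simp
    · intro ℓ _ hne; simp [hne, hqone ℓ]
    · simp
  -- integrability of each term
  have hterm_int : ∀ ℓ0 : Fin L, Integrable
      (fun x : Obs L => pdens f g E' x * Real.log (f ℓ0 (x ℓ0) / g ℓ0 (x ℓ0))) volume := by
    intro ℓ0
    have heq : ∀ x : Obs L, pdens f g E' x * Real.log (f ℓ0 (x ℓ0) / g ℓ0 (x ℓ0)) =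
        ∏ ℓ, (fun ℓ (t : ℝ) =>
          q ℓ t * (if ℓ = ℓ0 then Real.log (f ℓ0 t / g ℓ0 t) else 1)) ℓ (x ℓ) := by
      intro x
      rw [hpd, Finset.prod_mul_distrib]
      congr 1
      simp [Finset.prod_ite_eq']
    simp_rw [heq]
    apply MeasureTheory.Integrable.fintype_prod (f := fun ℓ (t : ℝ) =>
      q ℓ t * (if ℓ = ℓ0 then Real.log (f ℓ0 t / g ℓ0 t) else 1))
    intro ℓ
    by_cases h : ℓ = ℓ0
    · subst h
      by_cases h' : ℓ ∈ E'
      · refine (hDfg ℓ).congr ?_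
        filter_upwards with t
        simp [hq, h']
      · refine ((hDgf ℓ).neg).congr ?_
        filter_upwards with t
        have h3 : Real.log (f ℓ t / g ℓ t) = -Real.log (g ℓ t / f ℓ t) := by
          rw [← Real.log_inv, inv_div]
        simp only [Pi.neg_apply, hq, if_neg h', if_pos rfl, eq_self_iff_true, if_true, h3]
        ring
    · refine (hqint ℓ).congr ?_
      filter_upwards with t
      simp [h]
  -- put it together
  calc (∫ x : Obs L, pdens f g E' x * Real.log (pdens f g E x / gdens g x))
      = ∫ x : Obs L, ∑ ℓ ∈ E, pdens f g E' x * Real.log (f ℓ (x ℓ) / g ℓ (x ℓ)) := by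
        congr 1; funext x; rw [hlog, Finset.mul_sum]
    _ = ∑ ℓ ∈ E, ∫ x : Obs L, pdens f g E' x * Real.log (f ℓ (x ℓ) / g ℓ (x ℓ)) :=
        integral_finset_sum E fun ℓ _ => hterm_int ℓ
    _ = ∑ ℓ ∈ E, ∫ t, q ℓ t * Real.log (f ℓ t / g ℓ t) := by
        exact Finset.sum_congr rfl fun ℓ _ => key ℓ
    _ = _ := by
        rw [← Finset.sum_inter_add_sum_sdiff E E'
          (fun ℓ => ∫ t, q ℓ t * Real.log (f ℓ t / g ℓ t))]
        have h1 : ∀ ℓ ∈ E ∩ E', (∫ t, q ℓ t * Real.log (f ℓ t / g ℓ t)) =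
            ∫ t : ℝ, f ℓ t * Real.log (f ℓ t / g ℓ t) := by
          intro ℓ hℓ
          have : ℓ ∈ E' := (Finset.mem_inter.1 hℓ).2
          simp [hq, this]
        have h2 : ∀ ℓ ∈ E \ E', (∫ t, q ℓ t * Real.log (f ℓ t / g ℓ t)) =
            -∫ t : ℝ, g ℓ t * Real.log (g ℓ t / f ℓ t) := by
          intro ℓ hℓ
          have hn : ℓ ∉ E' := (Finset.mem_sdiff.1 hℓ).2
          have : (fun t : ℝ => g ℓ t * Real.log (f ℓ t / g ℓ t)) =
              fun t : ℝ => -(g ℓ t * Real.log (g ℓ t / f ℓ t)) := by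
            funext t
            have h3 : Real.log (f ℓ t / g ℓ t) = -Real.log (g ℓ t / f ℓ t) := by
              rw [← Real.log_inv, inv_div]
            rw [h3]; ring
          rw [show (fun t : ℝ => q ℓ t * Real.log (f ℓ t / g ℓ t)) =
              fun t : ℝ => -(g ℓ t * Real.log (g ℓ t / f ℓ t)) by
            simp only [hq, if_neg hn]; exact this]
          simp [integral_neg]
        rw [Finset.sum_congr rfl h1, Finset.sum_congr rfl h2, Finset.sum_neg_distrib]
        ring

/-- Cross drifts between two anomaly placements.  For distinct size-`m`
sets `E ≠ E'` with finite, strictly positive KL divergences at every sensor,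
`∫ p_{E'} log(p_E/g) = ∑_{ℓ∈E∩E'} D(f_ℓ‖g_ℓ) − ∑_{ℓ∈E∖E'} D(g_ℓ‖f_ℓ)`, and consequently
`∫ p_{E'} log(p_E/g) < ∫ p_E log(p_E/g) = ∑_{ℓ∈E} D(f_ℓ‖g_ℓ)`. -/
theorem stmt16 {L m : ℕ} (hL : 1 ≤ L) (hm : 1 ≤ m) (hmL : m ≤ L)
    (f g : Fin L → ℝ → ℝ)
    (hf : ∀ ℓ, IsPosDensity (f ℓ)) (hg : ∀ ℓ, IsPosDensity (g ℓ))
    (hfg : ∀ ℓ, 0 < volume {t | f ℓ t ≠ g ℓ t})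
    (hDfg : ∀ ℓ, Integrable (fun t : ℝ => f ℓ t * Real.log (f ℓ t / g ℓ t)) volume)
    (hDgf : ∀ ℓ, Integrable (fun t : ℝ => g ℓ t * Real.log (g ℓ t / f ℓ t)) volume)
    (hDfg_pos : ∀ ℓ, 0 < ∫ t : ℝ, f ℓ t * Real.log (f ℓ t / g ℓ t))
    (hDgf_pos : ∀ ℓ, 0 < ∫ t : ℝ, g ℓ t * Real.log (g ℓ t / f ℓ t))
    (E E' : Finset (Fin L)) (hE : E.card = m) (hE' : E'.card = m) (hne : E ≠ E') :
    (∫ x : Obs L, pdens f g E' x * Real.log (pdens f g E x / gdens g x)) =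
        (∑ ℓ ∈ E ∩ E', ∫ t : ℝ, f ℓ t * Real.log (f ℓ t / g ℓ t)) -
          ∑ ℓ ∈ E \ E', ∫ t : ℝ, g ℓ t * Real.log (g ℓ t / f ℓ t) ∧
      (∫ x : Obs L, pdens f g E' x * Real.log (pdens f g E x / gdens g x)) <
        ∫ x : Obs L, pdens f g E x * Real.log (pdens f g E x / gdens g x) ∧
      (∫ x : Obs L, pdens f g E x * Real.log (pdens f g E x / gdens g x)) =
        ∑ ℓ ∈ E, ∫ t : ℝ, f ℓ t * Real.log (f ℓ t / g ℓ t) := by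
  have hmain := cross f g hf hg hDfg hDgf E E'
  have hself := cross f g hf hg hDfg hDgf E E
  simp only [Finset.inter_self, Finset.sdiff_self, Finset.sum_empty, sub_zero] at hself
  refine ⟨hmain, ?_, hself⟩
  rw [hmain, hself]
  have hdne : (E \ E').Nonempty := by
    rw [Finset.sdiff_nonempty]
    intro hsub
    exact hne (Finset.eq_of_subset_of_card_le hsub (by rw [hE, hE']))
  have hpos1 : 0 < ∑ ℓ ∈ E \ E', ∫ t : ℝ, f ℓ t * Real.log (f ℓ t / g ℓ t) :=
    Finset.sum_pos (fun ℓ _ => hDfg_pos ℓ) hdne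
  have hpos2 : 0 < ∑ ℓ ∈ E \ E', ∫ t : ℝ, g ℓ t * Real.log (g ℓ t / f ℓ t) :=
    Finset.sum_pos (fun ℓ _ => hDgf_pos ℓ) hdne
  have hsplit := Finset.sum_inter_add_sum_sdiff E E'
    (fun ℓ => ∫ t : ℝ, f ℓ t * Real.log (f ℓ t / g ℓ t))
  linarith


end MovingAnomaly
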